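/- Let ν be a regular cardinal and θ a cardinal with cf θ < ν < θ. Then cf(ν, θ) > θ; equivalently, for any set z of size θ, P_ν z has no cofinal subset of size ≤ θ. -/

import Mathlib

set_option autoImplicit false

open Cardinal Set

/-- `x` has cardinality `< c`. -/
def cardLT (x : Set Ordinal.{0}) (c : Cardinal.{0}) : Prop :=
  Cardinal.mk ↥x < Cardinal.lift.{1, 0} c

/-- `x` has cardinality `≤ c`. -/
def cardLE (x : Set Ordinal.{0}) (c : Cardinal.{0}) : Prop :=
  Cardinal.mk ↥x ≤ Cardinal.lift.{1, 0} c

/-- `x` has cardinality `= c`. -/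
def cardEQ (x : Set Ordinal.{0}) (c : Cardinal.{0}) : Prop :=
  Cardinal.mk ↥x = Cardinal.lift.{1, 0} c

/-- `P_κ Λ`: subsets of `{β | β < Λ}` of size `< κ`. -/
def pkl (κ : Cardinal.{0}) (Λ : Ordinal.{0}) : Set (Set Ordinal.{0}) :=
  {x | x ⊆ Set.Iio Λ ∧ cardLT x κ}

/-- `C` is club in the ground family `X`: cofinal in `(X, ⊆)` and closed under
unions of `⊆`-increasing chains of length `< κ`. -/
def IsClubP (κ : Cardinal.{0}) (X C : Set (Set Ordinal.{0})) : Prop :=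
  C ⊆ X ∧ (∀ x ∈ X, ∃ c ∈ C, x ⊆ c) ∧
  ∀ (δ : Ordinal.{0}) (f : Ordinal.{0} → Set Ordinal.{0}),
    δ ≠ 0 → δ < κ.ord →
    (∀ i j, i ≤ j → j < δ → f i ⊆ f j) →
    (∀ i < δ, f i ∈ C) →
    (⋃ i ∈ Set.Iio δ, f i) ∈ C

/-- `S` is stationary in the ground family `X`: `S ⊆ X` and `S` meets every club. -/
def IsStatP (κ : Cardinal.{0}) (X S : Set (Set Ordinal.{0})) : Prop :=
  S ⊆ X ∧ ∀ C, IsClubP κ X C → (S ∩ C).Nonempty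

/-- `C` is closed unbounded in the ordinal `κ`. -/
def IsClubIn (C : Set Ordinal.{0}) (κ : Ordinal.{0}) : Prop :=
  C ⊆ Set.Iio κ ∧ (∀ α < κ, ∃ β ∈ C, α ≤ β) ∧
  ∀ δ, δ ≠ 0 → δ < κ → (∀ α < δ, ∃ β ∈ C, α < β ∧ β < δ) → δ ∈ C

/-- `S` is stationary in the ordinal `κ`. -/
def IsStatIn (S : Set Ordinal.{0}) (κ : Ordinal.{0}) : Prop :=
  S ⊆ Set.Iio κ ∧ ∀ C, IsClubIn C κ → (S ∩ C).Nonempty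

/-- `C(f)`: the members of `P_κ Λ` closed under `f`. -/
def clubC (κ : Cardinal.{0}) (Λ : Ordinal.{0}) (f : Finset Ordinal.{0} → Set Ordinal.{0}) :
    Set (Set Ordinal.{0}) :=
  {x | x ∈ pkl κ Λ ∧ ∀ a : Finset Ordinal.{0}, ↑a ⊆ x → f a ⊆ x}


lemma exists_avoid (ν θ : Cardinal.{0}) (hθ : ℵ₀ ≤ θ) (hν : ν < θ)
    (c : Ordinal.{0} → Set Ordinal.{0})
    (hc : ∀ ξ < θ.ord, Cardinal.mk ↥(c ξ) < Cardinal.lift.{1,0} ν)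
    (β : Ordinal.{0}) (hβ0 : 0 < β) (hβ : β < θ.ord) :
    ∃ α < θ.ord, ∀ ξ < β, α ∉ c ξ := by
  by_contra h
  push_neg at h
  have hsub : Set.Iio θ.ord ⊆ ⋃ ξ ∈ Set.Iio β, c ξ := by
    intro α hα
    obtain ⟨ξ, hξ, hm⟩ := h α hα
    exact Set.mem_biUnion hξ hm
  have hne : Nonempty ↥(Set.Iio β) := ⟨⟨0, hβ0⟩⟩
  have hU : Cardinal.mk ↥(⋃ ξ ∈ Set.Iio β, c ξ) < Cardinal.lift.{1,0} θ := by
    calc Cardinal.mk ↥(⋃ ξ ∈ Set.Iio β, c ξ)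
        ≤ Cardinal.mk ↥(Set.Iio β) * ⨆ ξ : ↥(Set.Iio β), Cardinal.mk ↥(c ξ.1) :=
          Cardinal.mk_biUnion_le c (Set.Iio β)
      _ ≤ Cardinal.lift.{1,0} β.card * Cardinal.lift.{1,0} ν := by
          apply mul_le_mul'
          · rw [Ordinal.mk_Iio_ordinal]
          · exact ciSup_le' fun ξ => (hc ξ.1 (ξ.2.trans hβ)).le
      _ = Cardinal.lift.{1,0} (β.card * ν) := by rw [Cardinal.lift_mul]
      _ < Cardinal.lift.{1,0} θ := by
          rw [Cardinal.lift_lt]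
          exact Cardinal.mul_lt_of_lt hθ (Cardinal.lt_ord.mp hβ) hν
  have := (Cardinal.mk_le_mk_of_subset hsub).trans_lt hU
  rw [Ordinal.mk_Iio_ordinal, Cardinal.card_ord] at this
  exact lt_irrefl _ this

/-- If `ν` is regular and `cf θ < ν < θ`, then `cf(ν, θ) > θ`: no family of `≤ θ` sets
in `P_ν θ` is cofinal in `(P_ν θ, ⊆)`. -/
theorem cov_gt (ν θ : Cardinal.{0}) (hν : ν.IsRegular)
    (h1 : θ.ord.cof < ν) (h2 : ν < θ) :
    ¬ ∃ c : Ordinal.{0} → Set Ordinal.{0},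
        (∀ ξ < θ.ord, c ξ ⊆ Set.Iio θ.ord ∧ cardLT (c ξ) ν) ∧
        ∀ x : Set Ordinal.{0}, x ⊆ Set.Iio θ.ord → cardLT x ν →
          ∃ ξ < θ.ord, x ⊆ c ξ := by

  rintro ⟨c, hc, hcov⟩
  have hθ : ℵ₀ ≤ θ := hν.aleph0_le.trans h2.le
  have hθlim : Order.IsSuccLimit θ.ord := Cardinal.isSuccLimit_ord hθ
  obtain ⟨f, hf⟩ := Ordinal.exists_fundamental_sequence θ.ord
  have hcard : ∀ ξ < θ.ord, Cardinal.mk ↥(c ξ) < Cardinal.lift.{1,0} ν :=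
    fun ξ hξ => (hc ξ hξ).2
  have key : ∀ i : ↥(Set.Iio θ.ord.cof.ord),
      ∃ α < θ.ord, ∀ ξ < f i.1 i.2 + 1, α ∉ c ξ := by
    intro i
    have hfi : f i.1 i.2 < θ.ord := by
      have := Ordinal.lt_blsub f i.1 i.2
      rwa [hf.2.2] at this
    have h0 : (0 : Ordinal) < f i.1 i.2 + 1 :=
      zero_le.trans_lt (lt_add_one _)
    exact exists_avoid ν θ hθ h2 c hcard _ h0 (hθlim.add_one_lt hfi)
  choose g hg1 hg2 using key
  set x : Set Ordinal.{0} := Set.range g with hxdef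
  have hxsub : x ⊆ Set.Iio θ.ord := by
    rintro _ ⟨i, rfl⟩
    exact hg1 i
  have hxcard : cardLT x ν := by
    unfold cardLT
    calc Cardinal.mk ↥x ≤ Cardinal.mk ↥(Set.Iio θ.ord.cof.ord) := Cardinal.mk_range_le
      _ = Cardinal.lift.{1,0} θ.ord.cof := by
          rw [Ordinal.mk_Iio_ordinal, Cardinal.card_ord]
      _ < Cardinal.lift.{1,0} ν := Cardinal.lift_lt.mpr h1
  obtain ⟨ξ, hξ, hsub⟩ := hcov x hxsub hxcard
  have : ξ < Ordinal.blsub θ.ord.cof.ord f := by rwa [hf.2.2]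
  rw [Ordinal.lt_blsub_iff] at this
  obtain ⟨i, hi, hle⟩ := this
  have hmem : g ⟨i, hi⟩ ∈ c ξ := hsub (Set.mem_range_self _)
  exact hg2 ⟨i, hi⟩ ξ (hle.trans_lt (lt_add_one _)) hmem
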